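/- Let n ≥ 3 be odd and let A, Â ∈ [−1,1]^{n×n} both be skew-symmetric of rank n−1, each admitting a nonzero vector x with xᵀ times the matrix equal to 0ᵀ and Σᵢ xᵢ ≠ 0. Let π, π̂ ∈ S_n satisfy πᵀA = 0ᵀ and π̂ᵀÂ = 0ᵀ. Suppose π̂ ∈ S_n⁺⁺. If max_{i,j} |â_ij − a_ij| < π̂_min / φ(Â), where π̂_min = minᵢ π̂ᵢ, then π ∈ S_n⁺⁺. -/

import Mathlib

open Matrix

/-- Continuity (on a set) of a finite `inf'` of continuous functions. -/
lemma contOn_inf'_aux {ι : Type*} {U : Set ℝ} (f : ι → ℝ → ℝ)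
    (s : Finset ι) (hs : s.Nonempty) (hf : ∀ i ∈ s, ContinuousOn (f i) U) :
    ContinuousOn (fun t => s.inf' hs fun i => f i t) U := by
  exact ContinuousOn.finset_inf'_apply hs hf

/-- `φ(A) = max_{j∈[n]} max_{i∈[n]} |(1ᵀA_j⁻¹ − πᵀ)_i|`, where `A_j` is `A` with its
`j`-th column replaced by the all-ones vector and `π` is the unique element of `S_n`
with `πᵀA = 0ᵀ` (passed explicitly). -/
noncomputable def phi {n : ℕ} (A : Matrix (Fin n) (Fin n) ℝ) (π : Fin n → ℝ) : ℝ :=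
  ⨆ j : Fin n, ⨆ i : Fin n, |((1 : Fin n → ℝ) ᵥ* (A.updateCol j 1)⁻¹ - π) i|

/-- Under Condition 1 for both `A` and `Â`, with Nash-kernel vectors
`π, π̂ ∈ S_n`, if `π̂ ∈ S_n⁺⁺` and `max_{i,j} |â_ij − a_ij| < π̂_min / φ(Â)`,
then `π ∈ S_n⁺⁺`. -/
theorem stmt7 (n : ℕ) (hodd : Odd n) (hn : 3 ≤ n)
    (A Ahat : Matrix (Fin n) (Fin n) ℝ)
    (hboundA : ∀ i j, A i j ∈ Set.Icc (-1 : ℝ) 1)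
    (hboundAhat : ∀ i j, Ahat i j ∈ Set.Icc (-1 : ℝ) 1)
    (hskewA : Aᵀ = -A) (hskewAhat : Ahatᵀ = -Ahat)
    (hrankA : A.rank = n - 1) (hrankAhat : Ahat.rank = n - 1)
    (hkerA : ∃ x : Fin n → ℝ, x ≠ 0 ∧ x ᵥ* A = 0 ∧ ∑ i, x i ≠ 0)
    (hkerAhat : ∃ x : Fin n → ℝ, x ≠ 0 ∧ x ᵥ* Ahat = 0 ∧ ∑ i, x i ≠ 0)
    (π : Fin n → ℝ) (hπ1 : ∑ i, π i = 1) (hπ : π ᵥ* A = 0)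
    (πhat : Fin n → ℝ) (hπhat1 : ∑ i, πhat i = 1) (hπhat : πhat ᵥ* Ahat = 0)
    (hπhatpos : ∀ i, 0 < πhat i)
    (hclose : ∀ i j, |Ahat i j - A i j| < (⨅ i, πhat i) / phi Ahat πhat) :
    ∀ i, 0 < π i := by
  classical
  have hn0 : 0 < n := by omega
  haveI : NeZero n := ⟨by omega⟩
  set pm : ℝ := ⨅ i, πhat i with hpm_def
  set Φ : ℝ := phi Ahat πhat with hΦ_def
  set τ : ℝ := pm / Φ with hτ_def
  -- basic facts about pm
  have hpm_le : ∀ i, pm ≤ πhat i := fun i =>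
    ciInf_le (Set.Finite.bddBelow (Set.finite_range _)) i
  have hpm_pos : 0 < pm := by
    obtain ⟨i0, -, hi0⟩ := Finset.exists_min_image Finset.univ πhat ⟨0, Finset.mem_univ 0⟩
    have h1 : πhat i0 ≤ pm := le_ciInf fun i => hi0 i (Finset.mem_univ i)
    exact lt_of_lt_of_le (hπhatpos i0) h1
  have hpm_n : (n : ℝ) * pm ≤ 1 := by
    have : ∑ _i : Fin n, pm ≤ ∑ i, πhat i := Finset.sum_le_sum fun i _ => hpm_le i
    simpa [hπhat1, Finset.sum_const, nsmul_eq_mul] using this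
  -- diagonal entries vanish
  have hdiagAhat : ∀ i, Ahat i i = 0 := by
    intro i
    have := congrFun (congrFun hskewAhat i) i
    simp only [Matrix.transpose_apply, Matrix.neg_apply] at this
    linarith
  have hdiagA : ∀ i, A i i = 0 := by
    intro i
    have := congrFun (congrFun hskewA i) i
    simp only [Matrix.transpose_apply, Matrix.neg_apply] at this
    linarith
  -- τ > 0 and Φ > 0
  have hτ_pos : 0 < τ := by
    have := hclose 0 0
    simpa [hdiagAhat, hdiagA] using this
  have hΦ_pos : 0 < Φ := by
    rcases lt_trichotomy Φ 0 with h | h | h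
    · exfalso
      have : τ < 0 := div_neg_of_pos_of_neg hpm_pos h
      linarith
    · exfalso; rw [hτ_def, h, div_zero] at hτ_pos; exact lt_irrefl _ hτ_pos
    · exact h
  have hΦτ : Φ * τ = pm := by
    rw [hτ_def]; field_simp [hΦ_pos.ne']
  -- perturbation matrix
  set E : Matrix (Fin n) (Fin n) ℝ := Ahat - A with hE_def
  have hEskew : Eᵀ = -E := by
    rw [hE_def, Matrix.transpose_sub, hskewAhat, hskewA]; ext i j; simp; ring
  have hE : ∀ i j, |E i j| < τ := by
    intro i j; simpa [hE_def, Matrix.sub_apply] using hclose i j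
  -- uniform entry bound c < τ
  set c : ℝ := (Finset.univ ×ˢ Finset.univ).sup' (by simp) (fun p : Fin n × Fin n => |E p.1 p.2|)
    with hc_def
  have hcE : ∀ i j, |E i j| ≤ c := fun i j =>
    Finset.le_sup' (f := fun p : Fin n × Fin n => |E p.1 p.2|) (by simp : (i, j) ∈ _)
  have hcτ : c < τ := by
    rw [hc_def]
    exact (Finset.sup'_lt_iff _).mpr fun p _ => hE p.1 p.2
  have hc0 : 0 ≤ c := le_trans (abs_nonneg _) (hcE 0 0)
  -- skew-symmetric conversion
  have hswap : ∀ (M : Matrix (Fin n) (Fin n) ℝ), Mᵀ = -M →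
      ∀ v : Fin n → ℝ, v ᵥ* M = -(M *ᵥ v) := by
    intro M hM v
    rw [← Matrix.mulVec_transpose, hM, Matrix.neg_mulVec]
  have hAhatπ : Ahat *ᵥ πhat = 0 := by
    have h := hswap Ahat hskewAhat πhat
    rw [hπhat] at h
    simpa [neg_eq_zero] using h.symm
  have hπhat_ne : πhat ≠ 0 := by
    intro h; rw [h] at hπhat1; simpa using hπhat1
  -- the left kernel of Ahat is spanned by πhat
  have hker : ∀ u : Fin n → ℝ, u ᵥ* Ahat = 0 → ∃ r : ℝ, u = r • πhat := by
    have hrank' : (Ahatᵀ).rank = n - 1 := by rw [Matrix.rank_transpose]; exact hrankAhat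
    have hdim : Module.finrank ℝ (LinearMap.ker (Matrix.mulVecLin Ahatᵀ)) = 1 := by
      have h1 := LinearMap.finrank_range_add_finrank_ker (Matrix.mulVecLin Ahatᵀ)
      have h2 : Module.finrank ℝ (LinearMap.range (Matrix.mulVecLin Ahatᵀ)) = n - 1 := hrank'
      have h3 : Module.finrank ℝ (Fin n → ℝ) = n := Module.finrank_fin_fun ℝ
      rw [h2, h3] at h1
      omega
    have hmem : πhat ∈ LinearMap.ker (Matrix.mulVecLin Ahatᵀ) := by
      rw [LinearMap.mem_ker]
      show Ahatᵀ *ᵥ πhat = 0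
      rw [Matrix.mulVec_transpose]
      exact hπhat
    intro u hu
    have hmemu : u ∈ LinearMap.ker (Matrix.mulVecLin Ahatᵀ) := by
      rw [LinearMap.mem_ker]
      show Ahatᵀ *ᵥ u = 0
      rw [Matrix.mulVec_transpose]
      exact hu
    have hnz : (⟨πhat, hmem⟩ : LinearMap.ker (Matrix.mulVecLin Ahatᵀ)) ≠ 0 := by
      intro h
      exact hπhat_ne (by simpa [Subtype.ext_iff] using h)
    obtain ⟨r, hr⟩ := (finrank_eq_one_iff_of_nonzero'
      (⟨πhat, hmem⟩ : LinearMap.ker (Matrix.mulVecLin Ahatᵀ)) hnz).mp hdim ⟨u, hmemu⟩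
    refine ⟨r, ?_⟩
    have := congrArg Subtype.val hr
    simpa using this.symm
  -- update-column matrices are invertible
  have hπM : ∀ j : Fin n, πhat ᵥ* (Ahat.updateCol j 1) = Pi.single j 1 := by
    intro j
    funext k
    by_cases hk : k = j
    · subst hk
      simp only [Matrix.vecMul, dotProduct, Matrix.updateCol_apply,
        Pi.single_eq_same, Pi.one_apply]
      simpa using hπhat1
    · have h0 := congrFun hπhat k
      simp only [Matrix.vecMul, dotProduct, Pi.zero_apply] at h0
      simp only [Matrix.vecMul, dotProduct, Matrix.updateCol_apply, if_neg hk,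
        Pi.single_eq_of_ne hk]
      exact h0
  have hMdet : ∀ j : Fin n, IsUnit (Ahat.updateCol j 1).det := by
    intro j
    rw [isUnit_iff_ne_zero, Ne, ← Matrix.exists_mulVec_eq_zero_iff]
    rintro ⟨v, hv0, hv⟩
    have hvj : v j = 0 := by
      have h2 : πhat ⬝ᵥ ((Ahat.updateCol j 1) *ᵥ v) = v j := by
        rw [Matrix.dotProduct_mulVec, hπM j]
        simp [dotProduct, Pi.single_apply]
      rw [hv] at h2
      simpa using h2.symm
    have h3 : Ahat *ᵥ v = 0 := by
      funext i
      have h4 := congrFun hv i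
      simp only [Matrix.mulVec, dotProduct, Matrix.updateCol_apply,
        Pi.zero_apply] at h4 ⊢
      rw [← h4]
      refine Finset.sum_congr rfl fun k _ => ?_
      by_cases hk : k = j
      · subst hk; rw [hvj]; ring
      · rw [if_neg hk]
    have h5 : v ᵥ* Ahat = 0 := by
      have h := hswap Ahat hskewAhat v
      rw [h3] at h
      simpa using h
    obtain ⟨r, hr⟩ := hker v h5
    have : r = 0 := by
      have := congrFun hr j
      rw [hvj] at this
      simp only [Pi.smul_apply, smul_eq_mul] at this
      rcases mul_eq_zero.mp this.symm with h | h
      · exact h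
      · exact absurd h (ne_of_gt (hπhatpos j))
    exact hv0 (by rw [hr, this, zero_smul])
  -- the z vectors
  set z : Fin n → Fin n → ℝ :=
    fun j => (1 : Fin n → ℝ) ᵥ* (Ahat.updateCol j 1)⁻¹ - πhat with hz_def
  have hzΦ : ∀ j i, |z j i| ≤ Φ := by
    intro j i
    have h1 : |z j i| ≤ ⨆ i, |z j i| :=
      le_ciSup (f := fun i => |z j i|) (Set.Finite.bddAbove (Set.finite_range _)) i
    have h2 : (⨆ i, |z j i|) ≤ Φ :=
      le_ciSup (f := fun j => ⨆ i, |z j i|)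
        (Set.Finite.bddAbove (Set.finite_range _)) j
    exact le_trans h1 h2
  have hyM : ∀ j, ((1 : Fin n → ℝ) ᵥ* (Ahat.updateCol j 1)⁻¹) ᵥ*
      (Ahat.updateCol j 1) = 1 := by
    intro j
    rw [Matrix.vecMul_vecMul, Matrix.nonsing_inv_mul _ (hMdet j), Matrix.vecMul_one]
  have hysum : ∀ j, ∑ i, ((1 : Fin n → ℝ) ᵥ* (Ahat.updateCol j 1)⁻¹) i = 1 := by
    intro j
    have h := congrFun (hyM j) j
    simp only [Matrix.vecMul, dotProduct, Matrix.updateCol_apply,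
      eq_self_iff_true, if_true, Pi.one_apply, mul_one, one_mul] at h ⊢
    exact h
  have hzsum : ∀ j, ∑ i, z j i = 0 := by
    intro j
    simp only [hz_def, Pi.sub_apply, Finset.sum_sub_distrib, hysum j, hπhat1, sub_self]
  have hzA : ∀ j, z j ᵥ* Ahat =
      (fun _ => (1:ℝ)) - (πhat j)⁻¹ • (Pi.single j (1:ℝ) : Fin n → ℝ) := by
    intro j
    set y : Fin n → ℝ := (1 : Fin n → ℝ) ᵥ* (Ahat.updateCol j 1)⁻¹ with hy_def
    have hyoff : ∀ k, k ≠ j → (y ᵥ* Ahat) k = 1 := by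
      intro k hk
      have h := congrFun (hyM j) k
      rw [hy_def]
      simp only [Matrix.vecMul, dotProduct, Matrix.updateCol_apply, if_neg hk,
        Pi.one_apply, one_mul] at h ⊢
      exact h
    have hzoff : ∀ k, k ≠ j → (z j ᵥ* Ahat) k = 1 := by
      intro k hk
      have hsub : z j ᵥ* Ahat = y ᵥ* Ahat - πhat ᵥ* Ahat := by
        rw [hz_def]
        exact Matrix.sub_vecMul Ahat y πhat
      rw [hsub]
      simp only [Pi.sub_apply, hyoff k hk, hπhat]
      simp
    have hdot : (z j ᵥ* Ahat) ⬝ᵥ πhat = 0 := by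
      rw [← Matrix.dotProduct_mulVec, hAhatπ, dotProduct_zero]
    have hzj : (z j ᵥ* Ahat) j = 1 - (πhat j)⁻¹ := by
      have hsplit : (z j ᵥ* Ahat) ⬝ᵥ πhat =
          (z j ᵥ* Ahat) j * πhat j + ∑ k ∈ Finset.univ.erase j, (z j ᵥ* Ahat) k * πhat k := by
        rw [dotProduct]
        exact (Finset.add_sum_erase Finset.univ _ (Finset.mem_univ j)).symm
      have herase : ∑ k ∈ Finset.univ.erase j, (z j ᵥ* Ahat) k * πhat k =
          ∑ k ∈ Finset.univ.erase j, πhat k := by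
        refine Finset.sum_congr rfl fun k hk => ?_
        rw [hzoff k (Finset.ne_of_mem_erase hk), one_mul]
      have hers : ∑ k ∈ Finset.univ.erase j, πhat k = 1 - πhat j := by
        have := Finset.add_sum_erase Finset.univ πhat (Finset.mem_univ j)
        rw [hπhat1] at this
        linarith
      rw [hsplit, herase, hers] at hdot
      have hpj := hπhatpos j
      field_simp
      nlinarith [hdot]
    funext k
    by_cases hk : k = j
    · subst hk
      simp only [Pi.sub_apply, Pi.smul_apply, Pi.single_eq_same, smul_eq_mul, mul_one]
      exact hzj
    · simp only [Pi.sub_apply, Pi.smul_apply, Pi.single_eq_of_ne hk, smul_eq_mul, mul_zero,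
        sub_zero]
      exact hzoff k hk
  -- core quantitative lemma
  have hcore : ∀ w : Fin n → ℝ, (∑ i, w i = 0) → ∀ Bq : ℝ,
      (∀ k, |(w ᵥ* Ahat) k| ≤ Bq) → ∀ i, |w i| ≤ Φ * Bq := by
    intro w hw Bq hB
    set v : Fin n → ℝ := w ᵥ* Ahat with hv_def
    have hvπ : v ⬝ᵥ πhat = 0 := by
      rw [hv_def, ← Matrix.dotProduct_mulVec, hAhatπ, dotProduct_zero]
    set u : Fin n → ℝ := ∑ j, (-(πhat j * v j)) • z j with hu_def
    have huA : u ᵥ* Ahat = v := by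
      have h1 : ∀ k, (u ᵥ* Ahat) k = ∑ j, -(πhat j * v j) * (z j ᵥ* Ahat) k := by
        intro k
        simp only [hu_def, Matrix.vecMul, dotProduct, Finset.sum_apply,
          Pi.smul_apply, smul_eq_mul]
        calc ∑ i, (∑ j, -(πhat j * v j) * z j i) * Ahat i k
            = ∑ i, ∑ j, -(πhat j * v j) * z j i * Ahat i k :=
              Finset.sum_congr rfl fun i _ => Finset.sum_mul _ _ _
          _ = ∑ j, ∑ i, -(πhat j * v j) * z j i * Ahat i k := Finset.sum_comm
          _ = ∑ j, -(πhat j * v j) * ∑ i, z j i * Ahat i k := by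
              refine Finset.sum_congr rfl fun j _ => ?_
              rw [Finset.mul_sum]
              exact Finset.sum_congr rfl fun i _ => by ring
      funext k
      rw [h1 k]
      simp only [hzA, Pi.sub_apply, Pi.smul_apply, smul_eq_mul, Pi.single_apply]
      have hterm : ∀ j, -(πhat j * v j) * ((1:ℝ) - (πhat j)⁻¹ * (if k = j then 1 else 0)) =
          -(πhat j * v j) + (if k = j then v j else 0) := by
        intro j
        have hpj := ne_of_gt (hπhatpos j)
        by_cases hkj : k = j
        · subst hkj
          rw [if_pos rfl, if_pos rfl]
          field_simp
          ring
        · rw [if_neg hkj, if_neg hkj]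
          ring
      rw [Finset.sum_congr rfl fun j _ => hterm j, Finset.sum_add_distrib]
      have hs1 : ∑ j, -(πhat j * v j) = 0 := by
        have : ∑ j, πhat j * v j = 0 := by
          have := hvπ
          simp only [dotProduct] at this
          rw [← this]
          exact Finset.sum_congr rfl fun j _ => mul_comm _ _
        rw [Finset.sum_neg_distrib, this, neg_zero]
      have hs2 : ∑ j, (if k = j then v j else 0) = v k := by
        simp
      rw [hs1, hs2, zero_add]
    have huapp : ∀ i, u i = ∑ j, -(πhat j * v j) * z j i := fun i => by
      rw [hu_def]; simp [Finset.sum_apply]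
    have husum : ∑ i, u i = 0 := by
      calc ∑ i, u i = ∑ i, ∑ j, -(πhat j * v j) * z j i :=
            Finset.sum_congr rfl fun i _ => huapp i
        _ = ∑ j, ∑ i, -(πhat j * v j) * z j i := Finset.sum_comm
        _ = 0 := by
            refine Finset.sum_eq_zero fun j _ => ?_
            rw [← Finset.mul_sum, hzsum j, mul_zero]
    have hwu : w = u := by
      have hd : (w - u) ᵥ* Ahat = 0 := by
        rw [Matrix.sub_vecMul Ahat w u, huA, hv_def, sub_self]
      obtain ⟨r, hr⟩ := hker _ hd
      have hr0 : r = 0 := by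
        have hsum : ∑ i, (w - u) i = 0 := by
          simp only [Pi.sub_apply, Finset.sum_sub_distrib, hw, husum, sub_self]
        rw [hr] at hsum
        simp only [Pi.smul_apply, smul_eq_mul, ← Finset.mul_sum, hπhat1, mul_one] at hsum
        exact hsum
      have := hr
      rw [hr0, zero_smul] at this
      have h2 : w - u = 0 := this
      funext i
      have := congrFun h2 i
      simp only [Pi.sub_apply, Pi.zero_apply] at this
      linarith
    intro i
    rw [hwu]
    have hBq0 : 0 ≤ Bq := le_trans (abs_nonneg _) (hB 0)
    rw [huapp i]
    calc |∑ j, -(πhat j * v j) * z j i| ≤ ∑ j, |(-(πhat j * v j)) * z j i| :=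
          Finset.abs_sum_le_sum_abs _ _
      _ ≤ ∑ j, πhat j * (Bq * Φ) := by
          refine Finset.sum_le_sum fun j _ => ?_
          rw [abs_mul, abs_neg, abs_mul, abs_of_pos (hπhatpos j)]
          have h1 : |v j| * |z j i| ≤ Bq * Φ :=
            mul_le_mul (hB j) (hzΦ j i) (abs_nonneg _) hBq0
          calc πhat j * |v j| * |z j i| = πhat j * (|v j| * |z j i|) := by ring
            _ ≤ πhat j * (Bq * Φ) :=
                mul_le_mul_of_nonneg_left h1 (le_of_lt (hπhatpos j))
      _ = Φ * Bq := by
          rw [← Finset.sum_mul, hπhat1, one_mul]; ring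
  -- zero-sum kernel lemma along the path
  have hzs : ∀ t : ℝ, |t| ≤ 1 → ∀ w : Fin n → ℝ, (∑ i, w i = 0) →
      w ᵥ* (Ahat - t • E) = 0 → w = 0 := by
    intro t ht w hw hwB
    by_contra hw0
    set Sw : ℝ := ∑ i, |w i| with hSw_def
    have hSw_pos : 0 < Sw := by
      rcases Function.ne_iff.mp hw0 with ⟨i, hi⟩
      have h1 : 0 < |w i| := abs_pos.mpr (by simpa using hi)
      have h2 : |w i| ≤ Sw :=
        Finset.single_le_sum (f := fun i => |w i|) (fun i _ => abs_nonneg _)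
          (Finset.mem_univ i)
      linarith
    have hbound : ∀ k, |(w ᵥ* Ahat) k| ≤ c * Sw := by
      intro k
      have h0 : w ᵥ* (Ahat - t • E) = w ᵥ* Ahat - w ᵥ* (t • E) :=
        Matrix.vecMul_sub Ahat (t • E) w
      rw [hwB] at h0
      have h1 : w ᵥ* Ahat = w ᵥ* (t • E) := sub_eq_zero.mp h0.symm
      rw [h1]
      have h2 : (w ᵥ* (t • E)) k = ∑ i, w i * (t * E i k) := by
        simp [Matrix.vecMul, dotProduct, Matrix.smul_apply]
      rw [h2]
      calc |∑ i, w i * (t * E i k)| ≤ ∑ i, |w i * (t * E i k)| :=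
            Finset.abs_sum_le_sum_abs _ _
        _ ≤ ∑ i, |w i| * c := by
            refine Finset.sum_le_sum fun i _ => ?_
            rw [abs_mul, abs_mul]
            have h3 : |t| * |E i k| ≤ c := by
              have h4 : |t| * |E i k| ≤ 1 * |E i k| :=
                mul_le_mul_of_nonneg_right ht (abs_nonneg _)
              rw [one_mul] at h4
              exact le_trans h4 (hcE i k)
            exact mul_le_mul_of_nonneg_left h3 (abs_nonneg _)
        _ = c * Sw := by rw [← Finset.sum_mul, ← hSw_def]; ring
    have hcw := hcore w hw (c * Sw) hbound
    have hSwle : Sw ≤ (n : ℝ) * (Φ * (c * Sw)) := by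
      calc Sw = ∑ i, |w i| := hSw_def
        _ ≤ ∑ _i : Fin n, Φ * (c * Sw) := Finset.sum_le_sum fun i _ => hcw i
        _ = (n : ℝ) * (Φ * (c * Sw)) := by simp [Finset.sum_const, nsmul_eq_mul]
    have hn' : (0:ℝ) < n := by exact_mod_cast hn0
    have hstrict : (n:ℝ) * (Φ * (c * Sw)) < (n:ℝ) * (Φ * (τ * Sw)) := by
      apply mul_lt_mul_of_pos_left _ hn'
      apply mul_lt_mul_of_pos_left _ hΦ_pos
      exact mul_lt_mul_of_pos_right hcτ hSw_pos
    have hfinal : (n:ℝ) * (Φ * (τ * Sw)) ≤ Sw := by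
      have he : (n:ℝ) * (Φ * (τ * Sw)) = ((n:ℝ) * pm) * Sw := by
        rw [← hΦτ]; ring
      rw [he]
      calc ((n:ℝ) * pm) * Sw ≤ 1 * Sw :=
            mul_le_mul_of_nonneg_right hpm_n (le_of_lt hSw_pos)
        _ = Sw := one_mul Sw
    linarith
  -- invertibility of the shifted matrices, and definition of q
  set J : Matrix (Fin n) (Fin n) ℝ := Matrix.of fun _ _ => (1 : ℝ) with hJ_def
  set S : ℝ → Matrix (Fin n) (Fin n) ℝ := fun t => Ahat - t • E + J with hS_def
  have hBskew : ∀ t : ℝ, (Ahat - t • E)ᵀ = -(Ahat - t • E) := by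
    intro t
    rw [Matrix.transpose_sub, Matrix.transpose_smul, hskewAhat, hEskew]
    ext i j; simp; ring
  have hJv : ∀ v : Fin n → ℝ, J *ᵥ v = fun _ => ∑ i, v i := by
    intro v
    funext i
    simp [hJ_def, Matrix.mulVec, dotProduct]
  have hskewzero : ∀ (M : Matrix (Fin n) (Fin n) ℝ), Mᵀ = -M →
      ∀ v : Fin n → ℝ, v ⬝ᵥ (M *ᵥ v) = 0 := by
    intro M hM v
    have h1 : v ⬝ᵥ (M *ᵥ v) = (v ᵥ* M) ⬝ᵥ v := Matrix.dotProduct_mulVec v M v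
    rw [hswap M hM v] at h1
    have h2 : (-(M *ᵥ v)) ⬝ᵥ v = -(v ⬝ᵥ (M *ᵥ v)) := by
      rw [neg_dotProduct, dotProduct_comm]
    rw [h2] at h1
    linarith
  have hSdet : ∀ t : ℝ, |t| ≤ 1 → IsUnit (S t).det := by
    intro t ht
    rw [isUnit_iff_ne_zero, Ne, ← Matrix.exists_mulVec_eq_zero_iff]
    rintro ⟨v, hv0, hv⟩
    have hsplit : (S t) *ᵥ v = (Ahat - t • E) *ᵥ v + J *ᵥ v :=
      Matrix.add_mulVec (Ahat - t • E) J v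
    have hdot : v ⬝ᵥ ((S t) *ᵥ v) = (∑ i, v i) ^ 2 := by
      rw [hsplit, dotProduct_add, hskewzero _ (hBskew t) v, zero_add, hJv]
      simp only [dotProduct, ← Finset.sum_mul, sq]
      try ring
    rw [hv] at hdot
    simp only [dotProduct_zero] at hdot
    have hsum0 : ∑ i, v i = 0 := by
      have := hdot.symm
      exact pow_eq_zero_iff (by norm_num) |>.mp this
    have hBv : (Ahat - t • E) *ᵥ v = 0 := by
      have h1 : J *ᵥ v = 0 := by
        rw [hJv, hsum0]
        funext i; simp
      rw [hv, h1, add_zero] at hsplit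
      exact hsplit.symm
    have hvB : v ᵥ* (Ahat - t • E) = 0 := by
      have h := hswap _ (hBskew t) v
      rw [hBv] at h
      simpa using h
    exact hv0 (hzs t ht v hsum0 hvB)
  set q : ℝ → Fin n → ℝ := fun t => (S t)⁻¹ *ᵥ (fun _ => 1) with hq_def
  have hq_main : ∀ t : ℝ, |t| ≤ 1 → (∑ i, q t i = 1) ∧ (Ahat - t • E) *ᵥ q t = 0 := by
    intro t ht
    have hSq : (S t) *ᵥ q t = fun _ => 1 := by
      rw [hq_def]
      show (S t) *ᵥ ((S t)⁻¹ *ᵥ _) = _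
      rw [Matrix.mulVec_mulVec, Matrix.mul_nonsing_inv _ (hSdet t ht), Matrix.one_mulVec]
    -- a kernel vector of (Ahat - t • E) with nonzero sum
    have hdetB : (Ahat - t • E).det = 0 := by
      have h1 : (Ahat - t • E)ᵀ.det = (Ahat - t • E).det := Matrix.det_transpose _
      rw [hBskew t, Matrix.det_neg] at h1
      have h2 : (-1 : ℝ) ^ Fintype.card (Fin n) = -1 := by
        rw [Fintype.card_fin]
        exact Odd.neg_one_pow hodd
      rw [h2] at h1
      linarith
    obtain ⟨x, hx0, hx⟩ := (Matrix.exists_mulVec_eq_zero_iff).mpr hdetB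
    have hxsum : ∑ i, x i ≠ 0 := by
      intro h
      apply hx0
      apply hzs t ht x h
      have hxv := hswap _ (hBskew t) x
      rw [hx] at hxv
      simpa using hxv
    have hxq : x ⬝ᵥ ((Ahat - t • E) *ᵥ q t) = 0 := by
      rw [Matrix.dotProduct_mulVec]
      have hxv := hswap _ (hBskew t) x
      rw [hx] at hxv
      have : x ᵥ* (Ahat - t • E) = 0 := by simpa using hxv
      rw [this, zero_dotProduct]
    have hBq : (Ahat - t • E) *ᵥ q t = fun _ => 1 - ∑ i, q t i := by
      have hsplit : (S t) *ᵥ q t = (Ahat - t • E) *ᵥ q t + J *ᵥ q t :=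
        Matrix.add_mulVec (Ahat - t • E) J (q t)
      rw [hSq, hJv] at hsplit
      funext i
      have := congrFun hsplit i
      simp only [Pi.add_apply] at this
      linarith
    have hqsum : ∑ i, q t i = 1 := by
      rw [hBq] at hxq
      have h1 : x ⬝ᵥ (fun _ => 1 - ∑ i, q t i) = (1 - ∑ i, q t i) * ∑ i, x i := by
        simp [dotProduct, ← Finset.sum_mul]
        ring
      rw [h1] at hxq
      rcases mul_eq_zero.mp hxq with h | h
      · linarith
      · exact absurd h hxsum
    refine ⟨hqsum, ?_⟩
    rw [hBq, hqsum]
    funext i; simp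
  -- endpoints
  have habs01 : ∀ t ∈ Set.Icc (0:ℝ) 1, |t| ≤ 1 := by
    intro t ht; rw [abs_le]; constructor <;> [linarith [ht.1]; exact ht.2]
  have hq_eq : ∀ t : ℝ, |t| ≤ 1 → ∀ p : Fin n → ℝ, (∑ i, p i = 1) →
      p ᵥ* (Ahat - t • E) = 0 → q t = p := by
    intro t ht p hp1 hpB
    have h1 := hq_main t ht
    have hqB : q t ᵥ* (Ahat - t • E) = 0 := by
      have h := hswap _ (hBskew t) (q t)
      rw [h1.2] at h
      simpa using h
    have hd : (q t - p) ᵥ* (Ahat - t • E) = 0 := by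
      rw [Matrix.sub_vecMul _ (q t) p, hqB, hpB, sub_self]
    have hdsum : ∑ i, (q t - p) i = 0 := by
      simp only [Pi.sub_apply, Finset.sum_sub_distrib, h1.1, hp1, sub_self]
    have := hzs t ht _ hdsum hd
    funext i
    have h2 := congrFun this i
    simp only [Pi.sub_apply, Pi.zero_apply] at h2
    linarith
  have hq0 : q 0 = πhat := by
    apply hq_eq 0 (by norm_num) πhat hπhat1
    have : Ahat - (0:ℝ) • E = Ahat := by simp
    rw [this]
    exact hπhat
  have hq1 : q 1 = π := by
    apply hq_eq 1 (by norm_num) π hπ1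
    have : Ahat - (1:ℝ) • E = A := by
      rw [hE_def]; simp
    rw [this]
    exact hπ
  -- continuity
  have hScont : Continuous S := by
    apply continuous_matrix
    intro i j
    have hSij : (fun t => S t i j) = fun t => Ahat i j - t * E i j + 1 := by
      funext t
      simp [hS_def, hJ_def, Matrix.add_apply, Matrix.sub_apply, Matrix.smul_apply,
        smul_eq_mul]
    rw [hSij]
    fun_prop
  have hdetc : Continuous fun t => (S t).det := hScont.matrix_det
  have hadjc : Continuous fun t => (S t).adjugate := hScont.matrix_adjugate
  have hqcont : ∀ i : Fin n, ContinuousOn (fun t => q t i) (Set.Icc (0:ℝ) 1) := by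
    intro i
    have hrepr : ∀ t ∈ Set.Icc (0:ℝ) 1,
        q t i = (∑ k, (S t).adjugate i k) / (S t).det := by
      intro t ht
      have hdet_ne : (S t).det ≠ 0 := (hSdet t (habs01 t ht)).ne_zero
      have h1 : q t i = Ring.inverse (S t).det * ∑ k, (S t).adjugate i k := by
        rw [hq_def]
        show ((S t)⁻¹ *ᵥ fun _ => (1:ℝ)) i = _
        rw [Matrix.inv_def]
        simp [Matrix.mulVec, dotProduct, Matrix.smul_apply, Finset.mul_sum]
      rw [h1, Ring.inverse_eq_inv']
      field_simp
    refine ContinuousOn.congr ?_ hrepr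
    apply ContinuousOn.div
    · exact (continuous_finset_sum _ fun k _ =>
        (continuous_apply k).comp ((continuous_apply i).comp hadjc)).continuousOn
    · exact hdetc.continuousOn
    · intro t ht
      exact (hSdet t (habs01 t ht)).ne_zero
  -- the quantitative positivity lemma
  have hquant : ∀ t : ℝ, |t| ≤ 1 → (∀ i, 0 ≤ q t i) → ∀ i, 0 < q t i := by
    intro t ht hqn
    have h1 := hq_main t ht
    set p : Fin n → ℝ := q t with hp_def
    set w : Fin n → ℝ := p - πhat with hw_def
    have hwsum : ∑ i, w i = 0 := by
      simp only [hw_def, Pi.sub_apply, Finset.sum_sub_distrib, h1.1, hπhat1, sub_self]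
    have hwA : ∀ k, |(w ᵥ* Ahat) k| ≤ c := by
      intro k
      have hpB : p ᵥ* (Ahat - t • E) = 0 := by
        have h := hswap _ (hBskew t) p
        rw [h1.2] at h
        simpa using h
      have h2 : p ᵥ* Ahat = p ᵥ* (t • E) := by
        have h0 : p ᵥ* (Ahat - t • E) = p ᵥ* Ahat - p ᵥ* (t • E) :=
          Matrix.vecMul_sub Ahat (t • E) p
        rw [hpB] at h0
        exact sub_eq_zero.mp h0.symm
      have h3 : w ᵥ* Ahat = p ᵥ* (t • E) := by
        rw [hw_def, Matrix.sub_vecMul Ahat p πhat, hπhat, sub_zero, h2]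
      rw [h3]
      have h4 : (p ᵥ* (t • E)) k = ∑ i, p i * (t * E i k) := by
        simp [Matrix.vecMul, dotProduct, Matrix.smul_apply]
      rw [h4]
      calc |∑ i, p i * (t * E i k)| ≤ ∑ i, |p i * (t * E i k)| :=
            Finset.abs_sum_le_sum_abs _ _
        _ ≤ ∑ i, p i * c := by
            refine Finset.sum_le_sum fun i _ => ?_
            rw [abs_mul, abs_of_nonneg (hqn i)]
            refine mul_le_mul_of_nonneg_left ?_ (hqn i)
            rw [abs_mul]
            have h5 : |t| * |E i k| ≤ 1 * |E i k| :=
              mul_le_mul_of_nonneg_right ht (abs_nonneg _)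
            rw [one_mul] at h5
            exact le_trans h5 (hcE i k)
        _ = c := by rw [← Finset.sum_mul, h1.1, one_mul]
    have hcw := hcore w hwsum c hwA
    intro i
    have h6 : |w i| ≤ Φ * c := hcw i
    have h7 : Φ * c < pm := by
      rw [← hΦτ]
      exact mul_lt_mul_of_pos_left hcτ hΦ_pos
    have h8 : |w i| < pm := lt_of_le_of_lt h6 h7
    have h9 : πhat i - pm < p i := by
      have := abs_lt.mp h8
      have hwi : w i = p i - πhat i := by simp [hw_def]
      linarith [this.1]
    have h10 : pm ≤ πhat i := hpm_le i
    have : 0 ≤ πhat i - pm := by linarith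
    linarith
  -- final IVT argument
  by_contra hcon
  push_neg at hcon
  obtain ⟨i0, hi0⟩ := hcon
  have hne : (Finset.univ : Finset (Fin n)).Nonempty := ⟨0, Finset.mem_univ 0⟩
  have hgcont : ContinuousOn (fun t => Finset.univ.inf' hne (fun i => q t i))
      (Set.Icc (0:ℝ) 1) :=
    contOn_inf'_aux (fun i t => q t i) Finset.univ hne (fun i _ => hqcont i)
  have hg0 : 0 < Finset.univ.inf' hne (fun i => q 0 i) := by
    refine (Finset.lt_inf'_iff _).mpr fun i _ => ?_
    rw [hq0]; exact hπhatpos i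
  have hg1 : Finset.univ.inf' hne (fun i => q 1 i) ≤ 0 := by
    have h2 : q 1 i0 ≤ 0 := by rw [hq1]; exact hi0
    exact le_trans (Finset.inf'_le (fun i => q 1 i) (Finset.mem_univ i0)) h2
  obtain ⟨t, ht, hgt⟩ : ∃ t ∈ Set.Icc (0:ℝ) 1,
      Finset.univ.inf' hne (fun i => q t i) = 0 := by
    have h0 : (0:ℝ) ∈ Set.Icc (Finset.univ.inf' hne (fun i => q 1 i))
        (Finset.univ.inf' hne (fun i => q 0 i)) := ⟨hg1, le_of_lt hg0⟩
    have h := intermediate_value_Icc' (by norm_num : (0:ℝ) ≤ 1) hgcont h0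
    obtain ⟨t, ht, hgt⟩ := h
    exact ⟨t, ht, hgt⟩
  have hqt_nonneg : ∀ i, 0 ≤ q t i := by
    intro i
    have h := Finset.inf'_le (fun i => q t i) (Finset.mem_univ i)
    rw [hgt] at h
    exact h
  have hqt_pos : ∀ i, 0 < q t i := hquant t (habs01 t ht) hqt_nonneg
  obtain ⟨i1, -, hi1⟩ := Finset.exists_mem_eq_inf' hne (fun i => q t i)
  rw [hgt] at hi1
  exact absurd hi1.symm (ne_of_gt (hqt_pos i1))
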